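/- In the marked cycle on Z_k (k ≥ 4) with start 0, end x = ⌊k/2⌋, and all nodes marked (B = Z_k), every valid path has length at least k + ⌊k/2⌋ − 2, and there exists a valid path of exactly this length. -/

import Mathlib

/-- The four move types in the marked cycle. -/
inductive Move : Type
  | a | b | c | d
deriving DecidableEq

/-- Where a move from node `x` in `ZMod k` leads. -/
def Move.step {k : ℕ} (x : ZMod k) : Move → ZMod k
  | .a => x - 1
  | .b => x
  | .c => x + 1
  | .d => x

/-- The node covered by a move performed from node `x`. -/
def Move.covers {k : ℕ} (x : ZMod k) : Move → ZMod k
  | .a => x - 1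
  | .b => x
  | .c => x
  | .d => x - 1

/-- The node reached after performing a sequence of moves starting at `s`. -/
def endAt {k : ℕ} (s : ZMod k) : List Move → ZMod k
  | [] => s
  | m :: ms => endAt (Move.step s m) ms

/-- The set of nodes covered by a sequence of moves starting at `s`. -/
def coveredSet {k : ℕ} (s : ZMod k) : List Move → Set (ZMod k)
  | [] => ∅
  | m :: ms => insert (Move.covers s m) (coveredSet (Move.step s m) ms)

/-- A valid path in the marked cycle on `ZMod k` with marked set `B`, start `s`,
end `t`: a nonempty sequence of moves from `s` to `t` covering every node of `B`. -/
def ValidPath {k : ℕ} (B : Set (ZMod k)) (s t : ZMod k) (p : List Move) : Prop :=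
  p ≠ [] ∧ endAt s p = t ∧ B ⊆ coveredSet s p

/-- A shortest valid path: valid and of minimum length among all valid paths. -/
def ShortestPath {k : ℕ} (B : Set (ZMod k)) (s t : ZMod k) (p : List Move) : Prop :=
  ValidPath B s t p ∧ ∀ q : List Move, ValidPath B s t q → p.length ≤ q.length

-- integer lift
def istep (y : ℤ) : Move → ℤ
  | .a => y - 1
  | .b => y
  | .c => y + 1
  | .d => y

def icover (y : ℤ) : Move → ℤ
  | .a => y - 1
  | .b => y
  | .c => y
  | .d => y - 1

def iend (y : ℤ) : List Move → ℤ
  | [] => y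
  | m :: ms => iend (istep y m) ms

def icovs (y : ℤ) : List Move → List ℤ
  | [] => []
  | m :: ms => icover y m :: icovs (istep y m) ms

def ipos (y : ℤ) : List Move → List ℤ
  | [] => [y]
  | m :: ms => y :: ipos (istep y m) ms

def nsteps : List Move → ℕ
  | [] => 0
  | .a :: ms => nsteps ms + 1
  | .c :: ms => nsteps ms + 1
  | .b :: ms => nsteps ms
  | .d :: ms => nsteps ms

def scovs (y : ℤ) : List Move → List ℤ
  | [] => []
  | .b :: ms => y :: scovs y ms
  | .d :: ms => (y - 1) :: scovs y ms
  | .a :: ms => scovs (y - 1) ms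
  | .c :: ms => scovs (y + 1) ms

lemma istep_cast {k : ℕ} (y : ℤ) (m : Move) :
    ((istep y m : ℤ) : ZMod k) = Move.step (y : ZMod k) m := by
  cases m <;> simp [istep, Move.step]

lemma icover_cast {k : ℕ} (y : ℤ) (m : Move) :
    ((icover y m : ℤ) : ZMod k) = Move.covers (y : ZMod k) m := by
  cases m <;> simp [icover, Move.covers]

lemma lem_end {k : ℕ} : ∀ (p : List Move) (y : ℤ),
    endAt (y : ZMod k) p = ((iend y p : ℤ) : ZMod k)
  | [], y => rfl
  | m :: ms, y => by
    rw [endAt, iend, ← istep_cast, lem_end ms]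

lemma lem_cov {k : ℕ} : ∀ (p : List Move) (y : ℤ) (v : ZMod k),
    v ∈ coveredSet (y : ZMod k) p ↔ ∃ z ∈ icovs y p, (z : ZMod k) = v
  | [], y, v => by simp [coveredSet, icovs]
  | m :: ms, y, v => by
    rw [coveredSet, icovs]
    simp only [Set.mem_insert_iff, List.mem_cons]
    rw [← istep_cast, lem_cov ms]
    constructor
    · rintro (rfl | ⟨z, hz, rfl⟩)
      · exact ⟨icover y m, Or.inl rfl, icover_cast y m⟩
      · exact ⟨z, Or.inr hz, rfl⟩
    · rintro ⟨z, (rfl | hz), rfl⟩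
      · exact Or.inl (icover_cast y m)
      · exact Or.inr ⟨z, hz, rfl⟩

lemma lem_len : ∀ (p : List Move) (y : ℤ),
    p.length = nsteps p + (scovs y p).length
  | [], _ => rfl
  | m :: ms, y => by
    cases m
    case a => have h := lem_len ms (y - 1); simp only [List.length_cons, nsteps, scovs]; omega
    case b => have h := lem_len ms y; simp only [List.length_cons, nsteps, scovs, List.length_cons]; omega
    case c => have h := lem_len ms (y + 1); simp only [List.length_cons, nsteps, scovs]; omega
    case d => have h := lem_len ms y; simp only [List.length_cons, nsteps, scovs, List.length_cons]; omega

lemma lem_disp : ∀ (p : List Move) (y : ℤ), |iend y p - y| ≤ (nsteps p : ℤ)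
  | [], y => by simp [iend]
  | m :: ms, y => by
    have h := lem_disp ms (istep y m)
    have htri : |iend (istep y m) ms - y| ≤ |iend (istep y m) ms - istep y m| + |istep y m - y| :=
      abs_sub_le _ _ _
    cases m
    case a =>
      simp only [istep, show y - 1 - y = (-1:ℤ) by ring, abs_neg, abs_one] at h htri
      simp only [iend, istep, nsteps]; push_cast; linarith
    case b =>
      simp only [istep, sub_self, abs_zero, add_zero] at h htri
      simp only [iend, istep, nsteps]; linarith
    case c =>
      simp only [istep, show y + 1 - y = (1:ℤ) by ring, abs_one] at h htri
      simp only [iend, istep, nsteps]; push_cast; linarith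
    case d =>
      simp only [istep, sub_self, abs_zero, add_zero] at h htri
      simp only [iend, istep, nsteps]; linarith

lemma lem_append_end : ∀ (q r : List Move) (y : ℤ),
    iend y (q ++ r) = iend (iend y q) r
  | [], r, y => rfl
  | m :: ms, r, y => by rw [List.cons_append, iend, iend, lem_append_end ms]

lemma lem_append_nsteps : ∀ (q r : List Move), nsteps (q ++ r) = nsteps q + nsteps r
  | [], r => by simp [nsteps]
  | m :: ms, r => by
    have h := lem_append_nsteps ms r
    cases m <;> simp only [List.cons_append, List.append_eq, nsteps] <;> omega

lemma lem_append_icovs : ∀ (q r : List Move) (y : ℤ),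
    icovs y (q ++ r) = icovs y q ++ icovs (iend y q) r
  | [], r, y => rfl
  | m :: ms, r, y => by
    rw [List.cons_append, icovs, icovs, iend, lem_append_icovs ms, List.cons_append]

def lmax : List ℤ → ℤ
  | [] => 0
  | x :: xs => max x (lmax xs)

def lmin : List ℤ → ℤ
  | [] => 0
  | x :: xs => min x (lmin xs)

lemma le_lmax : ∀ {l : List ℤ} {z : ℤ}, z ∈ l → z ≤ lmax l
  | x :: xs, z, h => by
    rcases List.mem_cons.mp h with rfl | h
    · exact le_max_left _ _
    · exact le_trans (le_lmax h) (le_max_right _ _)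

lemma lmin_le : ∀ {l : List ℤ} {z : ℤ}, z ∈ l → lmin l ≤ z
  | x :: xs, z, h => by
    rcases List.mem_cons.mp h with rfl | h
    · exact min_le_left _ _
    · exact le_trans (min_le_right _ _) (lmin_le h)

lemma lmax_mem : ∀ (l : List ℤ), lmax l ∈ l ∨ lmax l = 0
  | [] => Or.inr rfl
  | x :: xs => by
    rcases le_total x (lmax xs) with h | h
    · rcases lmax_mem xs with h2 | h2
      · exact Or.inl (by rw [lmax, max_eq_right h]; exact List.mem_cons_of_mem _ h2)
      · rw [lmax, h2]; rcases le_or_gt x 0 with h3 | h3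
        · exact Or.inr (by simp [max_eq_right h3])
        · exact Or.inl (by simp [max_eq_left h3.le])
    · exact Or.inl (by rw [lmax, max_eq_left h]; exact List.mem_cons_self)

lemma lmin_mem : ∀ (l : List ℤ), lmin l ∈ l ∨ lmin l = 0
  | [] => Or.inr rfl
  | x :: xs => by
    rcases le_total (lmin xs) x with h | h
    · rcases lmin_mem xs with h2 | h2
      · exact Or.inl (by rw [lmin, min_eq_right h]; exact List.mem_cons_of_mem _ h2)
      · rw [lmin, h2]; rcases le_or_gt 0 x with h3 | h3
        · exact Or.inr (by simp [min_eq_right h3])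
        · exact Or.inl (by simp [min_eq_left h3.le])
    · exact Or.inl (by rw [lmin, min_eq_left h]; exact List.mem_cons_self)

lemma start_mem_ipos : ∀ (p : List Move) (y : ℤ), y ∈ ipos y p
  | [], y => by simp [ipos]
  | m :: ms, y => by simp [ipos]

lemma iend_mem_ipos : ∀ (p : List Move) (y : ℤ), iend y p ∈ ipos y p
  | [], y => by simp [ipos, iend]
  | m :: ms, y => by
    rw [ipos, iend]
    exact List.mem_cons_of_mem _ (iend_mem_ipos ms _)

lemma lem_pos_take : ∀ (p : List Move) (y z : ℤ), z ∈ ipos y p →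
    ∃ i, i ≤ p.length ∧ iend y (p.take i) = z
  | [], y, z, h => by
    simp [ipos] at h
    exact ⟨0, by simp, by simp [iend, h.symm]⟩
  | m :: ms, y, z, h => by
    rw [ipos, List.mem_cons] at h
    rcases h with rfl | h
    · exact ⟨0, by simp, rfl⟩
    · obtain ⟨i, hi, he⟩ := lem_pos_take ms _ z h
      exact ⟨i + 1, by simpa using hi, he⟩

lemma icovs_mem_pos : ∀ (p : List Move) (y : ℤ), ∀ z ∈ icovs y p,
    z ∈ ipos y p ∨ z + 1 ∈ ipos y p
  | [], y, z, h => by simp [icovs] at h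
  | m :: ms, y, z, h => by
    rw [icovs, List.mem_cons] at h
    rcases h with rfl | h
    · cases m
      case a =>
        right
        have h0 : icover y Move.a + 1 = y := by simp [icover]
        rw [h0]; exact start_mem_ipos _ _
      case b =>
        left
        have h0 : icover y Move.b = y := by simp [icover]
        rw [h0]; exact start_mem_ipos _ _
      case c =>
        left
        have h0 : icover y Move.c = y := by simp [icover]
        rw [h0]; exact start_mem_ipos _ _
      case d =>
        right
        have h0 : icover y Move.d + 1 = y := by simp [icover]
        rw [h0]; exact start_mem_ipos _ _
    · rcases icovs_mem_pos ms (istep y m) z h with h2 | h2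
      · exact Or.inl (by rw [ipos]; exact List.mem_cons_of_mem _ h2)
      · exact Or.inr (by rw [ipos]; exact List.mem_cons_of_mem _ h2)

lemma icovs_classify : ∀ (p : List Move) (y : ℤ), ∀ z ∈ icovs y p,
    z ∈ scovs y p ∨ (z ∈ ipos y p ∧ z + 1 ∈ ipos y p)
  | [], y, z, h => by simp [icovs] at h
  | m :: ms, y, z, h => by
    rw [icovs, List.mem_cons] at h
    rcases h with rfl | h
    · cases m
      case a =>
        right
        constructor
        · rw [ipos]; exact List.mem_cons_of_mem _ (by simpa [icover, istep] using start_mem_ipos ms (y-1))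
        · rw [ipos]; simp [icover, show y - 1 + 1 = y by ring]
      case b => left; rw [scovs]; exact List.mem_cons_self
      case c =>
        right
        constructor
        · rw [ipos]; simp [icover]
        · rw [ipos]; exact List.mem_cons_of_mem _ (by simpa [icover, istep] using start_mem_ipos ms (y+1))
      case d => left; rw [scovs]; simp [icover]
    · rcases icovs_classify ms (istep y m) z h with h2 | ⟨h2, h3⟩
      · left
        cases m
        case a => rwa [scovs]
        case b => rw [scovs]; exact List.mem_cons_of_mem _ (by simpa [istep] using h2)
        case c => rwa [scovs]
        case d => rw [scovs]; exact List.mem_cons_of_mem _ (by simpa [istep] using h2)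
      · right
        exact ⟨by rw [ipos]; exact List.mem_cons_of_mem _ h2,
               by rw [ipos]; exact List.mem_cons_of_mem _ h3⟩

lemma seg_bound (p : List Move) (i j : ℕ) (hij : i ≤ j) :
    |iend 0 (p.take i) - 0| + |iend 0 (p.take j) - iend 0 (p.take i)|
      + |iend 0 p - iend 0 (p.take j)| ≤ (nsteps p : ℤ) := by
  have h1 : p.take j = p.take i ++ (p.take j).drop i := by
    conv_lhs => rw [← List.take_append_drop i (p.take j)]
    rw [List.take_take, min_eq_left hij]
  have h2 : p = p.take j ++ p.drop j := (List.take_append_drop j p).symm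
  have e1 : iend 0 (p.take j) = iend (iend 0 (p.take i)) ((p.take j).drop i) := by
    conv_lhs => rw [h1]
    rw [lem_append_end]
  have e2 : iend 0 p = iend (iend 0 (p.take j)) (p.drop j) := by
    conv_lhs => rw [h2]
    rw [lem_append_end]
  have n2 : nsteps p = nsteps (p.take i) + nsteps ((p.take j).drop i) + nsteps (p.drop j) := by
    conv_lhs => rw [h2]
    rw [lem_append_nsteps]
    conv_lhs => rw [h1]
    rw [lem_append_nsteps]
  have d1 := lem_disp (p.take i) 0
  have d2 := lem_disp ((p.take j).drop i) (iend 0 (p.take i))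
  have d3 := lem_disp (p.drop j) (iend 0 (p.take j))
  rw [← e1] at d2
  rw [← e2] at d3
  rw [n2]
  push_cast
  linarith

lemma lower_bound (k : ℕ) (hk : 4 ≤ k) (p : List Move)
    (hend : endAt (0 : ZMod k) p = ((k / 2 : ℕ) : ZMod k))
    (hcov : ∀ v : ZMod k, v ∈ coveredSet (0 : ZMod k) p) :
    k + k / 2 - 2 ≤ p.length := by
  haveI : NeZero k := ⟨by omega⟩
  set h : ℕ := k / 2 with hh
  have hcast0 : (((0:ℤ) : ZMod k)) = (0 : ZMod k) := by push_cast; rfl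
  set P := ipos (0:ℤ) p with hP
  set Mx := lmax P with hMx
  set mn := lmin P with hmn
  set e := iend (0:ℤ) p with he
  have h0P : (0:ℤ) ∈ P := start_mem_ipos p 0
  have heP : e ∈ P := iend_mem_ipos p 0
  have hMx0 : (0:ℤ) ≤ Mx := le_lmax h0P
  have hmn0 : mn ≤ (0:ℤ) := lmin_le h0P
  have heMx : e ≤ Mx := le_lmax heP
  have hemn : mn ≤ e := lmin_le heP
  have hMxP : Mx ∈ P := by
    rcases lmax_mem P with h1 | h1
    · exact h1
    · rw [hMx, h1]; exact h0P
  have hmnP : mn ∈ P := by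
    rcases lmin_mem P with h1 | h1
    · exact h1
    · rw [hmn, h1]; exact h0P
  have hcovz : ∀ v : ZMod k, ∃ z ∈ icovs (0:ℤ) p, ((z:ℤ) : ZMod k) = v := by
    intro v
    have hv := hcov v
    rw [← hcast0, lem_cov] at hv
    exact hv
  -- f2 : k ≤ Mx - mn + 2
  have hcard1 : (k:ℤ) ≤ Mx - mn + 2 := by
    have huniv : (Finset.univ : Finset (ZMod k)) ⊆
        (Finset.Icc (mn - 1) Mx).image (fun z : ℤ => (z : ZMod k)) := by
      intro v _
      obtain ⟨z, hz, rfl⟩ := hcovz v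
      refine Finset.mem_image.mpr ⟨z, ?_, rfl⟩
      rcases icovs_mem_pos p 0 z hz with h1 | h1
      · have ha : mn ≤ z := lmin_le h1
        have hb : z ≤ Mx := le_lmax h1
        exact Finset.mem_Icc.mpr ⟨by omega, by omega⟩
      · have ha : mn ≤ z + 1 := lmin_le h1
        have hb : z + 1 ≤ Mx := le_lmax h1
        exact Finset.mem_Icc.mpr ⟨by omega, by omega⟩
    have hc := Finset.card_le_card huniv
    rw [Finset.card_univ, ZMod.card] at hc
    have hc2 := le_trans hc (Finset.card_image_le)
    rw [Int.card_Icc] at hc2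
    omega
  -- f3 : k ≤ (Mx - mn) + #staycovers
  have hcard2 : (k:ℤ) ≤ (Mx - mn) + (scovs 0 p).length := by
    have huniv : (Finset.univ : Finset (ZMod k)) ⊆
        ((Finset.Icc mn (Mx - 1)) ∪ (scovs 0 p).toFinset).image (fun z : ℤ => (z : ZMod k)) := by
      intro v _
      obtain ⟨z, hz, rfl⟩ := hcovz v
      refine Finset.mem_image.mpr ⟨z, ?_, rfl⟩
      rcases icovs_classify p 0 z hz with h1 | ⟨h1, h2⟩
      · exact Finset.mem_union_right _ (List.mem_toFinset.mpr h1)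
      · have ha : mn ≤ z := lmin_le h1
        have hb : z + 1 ≤ Mx := le_lmax h2
        exact Finset.mem_union_left _ (Finset.mem_Icc.mpr ⟨by omega, by omega⟩)
    have hc := Finset.card_le_card huniv
    rw [Finset.card_univ, ZMod.card] at hc
    have hc2 := le_trans hc (Finset.card_image_le)
    have hc3 := le_trans hc2 (Finset.card_union_le _ _)
    have hc4 : (scovs 0 p).toFinset.card ≤ (scovs 0 p).length := List.toFinset_card_le _
    rw [Int.card_Icc] at hc3
    omega
  -- f4 : steps bound
  have hS : 2 * (Mx - mn) - |e| ≤ (nsteps p : ℤ) := by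
    obtain ⟨i, hi, hei⟩ := lem_pos_take p 0 Mx hMxP
    obtain ⟨j, hj, hej⟩ := lem_pos_take p 0 mn hmnP
    rcases le_total i j with hij | hij
    · have sb := seg_bound p i j hij
      rw [hei, hej] at sb
      have a1 : Mx ≤ |Mx - 0| := by rw [sub_zero]; exact le_abs_self _
      have a2 : Mx - mn ≤ |mn - Mx| := by rw [abs_sub_comm]; exact le_abs_self _
      have a3 : e - mn ≤ |e - mn| := le_abs_self _
      have a4 : -|e| ≤ e := neg_abs_le _
      linarith
    · have sb := seg_bound p j i hij
      rw [hei, hej] at sb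
      have a1 : -mn ≤ |mn - 0| := by rw [sub_zero]; exact neg_le_abs _
      have a2 : Mx - mn ≤ |Mx - mn| := le_abs_self _
      have a3 : Mx - e ≤ |e - Mx| := by rw [abs_sub_comm]; exact le_abs_self _
      have a4 : e ≤ |e| := le_abs_self _
      linarith
  -- f5
  have hlen : p.length = nsteps p + (scovs 0 p).length := lem_len p 0
  -- f6 : e ≡ h mod k
  have he' : ((e:ℤ) : ZMod k) = ((h:ℕ) : ZMod k) := by
    rw [← lem_end p 0, hcast0, hend]
  have hz : (((e - (h:ℕ) : ℤ)) : ZMod k) = 0 := by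
    push_cast
    rw [he']
    ring
  have hdvd : (k:ℤ) ∣ e - (h:ℕ) := (ZMod.intCast_zmod_eq_zero_iff_dvd _ k).mp hz
  obtain ⟨j, hj⟩ := hdvd
  -- arithmetic endgame
  set E := |e| with hE
  have hEe : E = e ∨ E = -e := abs_choice e
  have hER : E ≤ Mx - mn := by rcases hEe with h1 | h1 <;> omega
  have hkz : (0:ℤ) < (k:ℕ) := by exact_mod_cast (by omega : 0 < k)
  have hEcase : E = (h:ℤ) ∨ E = (k:ℤ) - h ∨ ((k:ℤ) + h - 2 ≤ E ∧ E ≤ Mx - mn) := by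
    rcases le_or_gt 1 j with hj1 | hj1
    · right; right
      have : (k:ℤ) * 1 ≤ (k:ℤ) * j := by
        apply mul_le_mul_of_nonneg_left hj1 hkz.le
      have heh : (k:ℤ) + h ≤ e := by omega
      have hE1 : E = e := abs_of_nonneg (by omega)
      omega
    rcases le_or_gt 0 j with hj0 | hj0
    · have : j = 0 := by omega
      subst this
      left
      have : e = (h:ℤ) := by omega
      rw [hE, this]
      exact abs_of_nonneg (by positivity)
    rcases le_or_gt j (-1) with hjm | hjm
    · rcases lt_or_ge j (-1) with hjm2 | hjm2
      · right; right
        have : (k:ℤ) * j ≤ (k:ℤ) * (-2) := by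
          apply mul_le_mul_of_nonneg_left (by omega) hkz.le
        have heh : e ≤ (h:ℤ) - 2 * k := by omega
        have hh2 : 2 * h ≤ k := by omega
        have hE1 : E = -e := abs_of_nonpos (by omega)
        omega
      · right; left
        have : j = -1 := by omega
        subst this
        have : e = (h:ℤ) - k := by omega
        have hh2 : 2 * h ≤ k := by omega
        have hE1 : E = -e := abs_of_nonpos (by omega)
        omega
    · omega
  have hh2 : 2 * h ≤ k ∧ k ≤ 2 * h + 1 := by omega
  rcases hEcase with h1 | h1 | ⟨h1, h2⟩ <;> omega

lemma iend_replicate_c : ∀ (n : ℕ) (y : ℤ), iend y (List.replicate n Move.c) = y + n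
  | 0, y => by simp [iend]
  | n + 1, y => by
    rw [List.replicate_succ, iend]
    rw [iend_replicate_c n]
    simp [istep]
    ring

lemma iend_replicate_a : ∀ (n : ℕ) (y : ℤ), iend y (List.replicate n Move.a) = y - n
  | 0, y => by simp [iend]
  | n + 1, y => by
    rw [List.replicate_succ, iend]
    rw [iend_replicate_a n]
    simp [istep]
    ring

lemma lem_c_mem : ∀ (n : ℕ) (y : ℤ) (i : ℕ), i < n →
    y + i ∈ icovs y (List.replicate n Move.c)
  | 0, _, _, h => by omega
  | n + 1, y, i, h => by
    rw [List.replicate_succ, icovs]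
    rcases Nat.eq_zero_or_pos i with rfl | hi
    · simp [icover]
    · refine List.mem_cons_of_mem _ ?_
      have := lem_c_mem n (y + 1) (i - 1) (by omega)
      have heq : (y + 1) + ((i - 1 : ℕ) : ℤ) = y + i := by
        have : ((i - 1 : ℕ) : ℤ) = (i : ℤ) - 1 := by omega
        rw [this]; ring
      rw [heq] at this
      simpa [istep] using this

lemma lem_a_mem : ∀ (n : ℕ) (y : ℤ) (i : ℕ), i < n →
    y - 1 - i ∈ icovs y (List.replicate n Move.a)
  | 0, _, _, h => by omega
  | n + 1, y, i, h => by
    rw [List.replicate_succ, icovs]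
    rcases Nat.eq_zero_or_pos i with rfl | hi
    · simp [icover]
    · refine List.mem_cons_of_mem _ ?_
      have := lem_a_mem n (y - 1) (i - 1) (by omega)
      have heq : (y - 1) - 1 - ((i - 1 : ℕ) : ℤ) = y - 1 - i := by
        have : ((i - 1 : ℕ) : ℤ) = (i : ℤ) - 1 := by omega
        rw [this]; ring
      rw [heq] at this
      simpa [istep] using this

lemma upper_bound (k : ℕ) (hk : 4 ≤ k) :
    ∃ p : List Move,
      ValidPath (Set.univ : Set (ZMod k)) 0 ((k / 2 : ℕ) : ZMod k) p ∧
      p.length = k + k / 2 - 2 := by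
  haveI : NeZero k := ⟨by omega⟩
  set h : ℕ := k / 2 with hh
  have hh2 : 2 ≤ h := by omega
  have hcast0 : (((0:ℤ) : ZMod k)) = (0 : ZMod k) := by push_cast; rfl
  set P0 : List Move :=
    List.replicate (h - 2) Move.c ++ Move.b :: (List.replicate (k - 2) Move.a ++ [Move.d])
    with hP0
  have hy1 : iend 0 (List.replicate (h - 2) Move.c) = ((h - 2 : ℕ) : ℤ) := by
    rw [iend_replicate_c]; ring
  set y1 : ℤ := ((h - 2 : ℕ) : ℤ) with hy1def
  have hy1' : y1 = (h : ℤ) - 2 := by omega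
  -- end point
  have hiend : iend 0 P0 = (h : ℤ) - k - 0 := by
    rw [hP0, lem_append_end, hy1]
    show iend (istep y1 Move.b) (List.replicate (k - 2) Move.a ++ [Move.d]) = _
    rw [lem_append_end]
    simp only [istep]
    rw [iend_replicate_a]
    show istep (y1 - ((k-2:ℕ):ℤ)) Move.d = _
    simp only [istep]
    have : ((k - 2 : ℕ) : ℤ) = (k : ℤ) - 2 := by omega
    rw [this, hy1']
    ring
  -- covers
  have hicovs : icovs 0 P0 =
      icovs 0 (List.replicate (h - 2) Move.c) ++
        (y1 :: (icovs y1 (List.replicate (k - 2) Move.a) ++ [y1 - ((k - 2 : ℕ) : ℤ) - 1])) := by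
    rw [hP0, lem_append_icovs, hy1]
    congr 1
    show icover y1 Move.b :: icovs (istep y1 Move.b) (List.replicate (k - 2) Move.a ++ [Move.d]) = _
    simp only [icover, istep]
    congr 1
    rw [lem_append_icovs, iend_replicate_a]
    congr 1
  refine ⟨P0, ⟨?_, ?_, ?_⟩, ?_⟩
  · -- nonempty
    simp [hP0]
  · -- end point
    rw [show (0 : ZMod k) = ((0:ℤ) : ZMod k) from hcast0.symm, lem_end, hiend]
    push_cast
    simp [ZMod.natCast_self]
  · -- coverage
    intro v _
    rw [show (0 : ZMod k) = ((0:ℤ) : ZMod k) from hcast0.symm, lem_cov]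
    set jv : ℕ := v.val with hjv
    have hjvk : jv < k := ZMod.val_lt v
    have hvcast : ((jv : ℕ) : ZMod k) = v := ZMod.natCast_rightInverse v
    rcases lt_or_ge (jv + 2) h with hcase | hcase
    · -- jv < h - 2 : covered by c-run
      refine ⟨(jv : ℤ), ?_, ?_⟩
      · rw [hicovs]
        refine List.mem_append_left _ ?_
        have := lem_c_mem (h - 2) 0 jv (by omega)
        simpa using this
      · push_cast [hvcast]
        rfl
    rcases Nat.lt_or_ge jv h with hcase2 | hcase2
    · rcases Nat.lt_or_ge (jv + 1) h with hcase3 | hcase3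
      · -- jv = h - 2 : covered by b
        have hje : jv = h - 2 := by omega
        refine ⟨y1, ?_, ?_⟩
        · rw [hicovs]
          exact List.mem_append_right _ (List.mem_cons_self)
        · rw [hy1def, ← hvcast, hje]
          push_cast
          ring
      · -- jv = h - 1 : covered by d
        have hje : jv = h - 1 := by omega
        refine ⟨y1 - ((k - 2 : ℕ) : ℤ) - 1, ?_, ?_⟩
        · rw [hicovs]
          refine List.mem_append_right _ (List.mem_cons_of_mem _ (List.mem_append_right _ ?_))
          simp
        · have hz : y1 - ((k - 2 : ℕ) : ℤ) - 1 = (h : ℤ) - k - 1 := by omega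
          rw [hz, ← hvcast, hje]
          push_cast [Nat.cast_sub (by omega : 1 ≤ h)]
          simp [ZMod.natCast_self]
    · -- h ≤ jv < k : covered by a-run
      set i : ℕ := h + k - 3 - jv with hi
      have hik : i < k - 2 := by omega
      refine ⟨y1 - 1 - (i : ℤ), ?_, ?_⟩
      · rw [hicovs]
        exact List.mem_append_right _
          (List.mem_cons_of_mem _ (List.mem_append_left _ (lem_a_mem (k - 2) y1 i hik)))
      · have hz : y1 - 1 - (i : ℤ) = (jv : ℤ) - k := by omega
        rw [hz, ← hvcast]
        push_cast
        simp [ZMod.natCast_self]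
  · -- length
    rw [hP0]
    simp
    omega

/-- for k ≥ 4, start 0, end ⌊k/2⌋, all nodes marked: every valid path
has length at least k + ⌊k/2⌋ − 2, and a valid path of exactly this length exists. -/
theorem worst_case_path (k : ℕ) (hk : 4 ≤ k) :
    (∀ p : List Move,
      ValidPath (Set.univ : Set (ZMod k)) 0 ((k / 2 : ℕ) : ZMod k) p →
        k + k / 2 - 2 ≤ p.length) ∧
    ∃ p : List Move,
      ValidPath (Set.univ : Set (ZMod k)) 0 ((k / 2 : ℕ) : ZMod k) p ∧
      p.length = k + k / 2 - 2 := by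
  constructor
  · intro p hp
    exact lower_bound k hk p hp.2.1 (fun v => hp.2.2 (Set.mem_univ v))
  · exact upper_bound k hk
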